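/- Decomposition into the nine indecomposable quivers is unique: let A, B, C be finite-dimensional vector spaces over F₂ = ZMod 2 and f : A →ₗ B, g : B →ₗ C, s : A →ₗ C linear maps with g ∘ f = 0. If the quiver (A, B, C, f, g, s) is isomorphic both to the direct sum of the nine indecomposable quivers with multiplicities (s₁, s₂, s₃, p₁, p₂, x₁, x₂, x₃, x₄) ∈ ℕ⁹ and to the direct sum with multiplicities (s₁′, s₂′, s₃′, p₁′, p₂′, x₁′, x₂′, x₃′, x₄′) ∈ ℕ⁹, then the two tuples of multiplicities are equal. -/

import Mathlib

/-! Concrete model for the direct sum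
`s₁·(S-1) ⊕ s₂·(S-2) ⊕ s₃·(S-3) ⊕ p₁·(P-1) ⊕ p₂·(P-2) ⊕ x₁·(X-1) ⊕ x₂·(X-2) ⊕ x₃·(X-3) ⊕ x₄·(X-4)`
of the nine indecomposable quivers over `F₂ = ZMod 2`, where
(S-1) = (F₂,0,0), (S-2) = (0,F₂,0), (S-3) = (0,0,F₂) (all maps zero);
(P-1) = (F₂,F₂,0) with f = id; (P-2) = (0,F₂,F₂) with g = id;
(X-1) = (F₂,0,F₂) with s = id; (X-2) = (F₂,F₂,F₂) with f = id, s = id, g = 0;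
(X-3) = (F₂,F₂,F₂) with f = 0, g = id, s = id;
(X-4) = (F₂,F₂⊕F₂,F₂) with f x = (x,0), g (y₁,y₂) = y₂, s = id. -/

abbrev F2 := ZMod 2

/-- The `A`-space of the direct sum quiver: one `F₂` summand for each copy of
(S-1), (P-1), (X-1), (X-2), (X-3), (X-4). -/
abbrev QA (s₁ p₁ x₁ x₂ x₃ x₄ : ℕ) :=
  (Fin s₁ → F2) × (Fin p₁ → F2) × (Fin x₁ → F2) × (Fin x₂ → F2) × (Fin x₃ → F2) ×
    (Fin x₄ → F2)

/-- The `B`-space of the direct sum quiver: one `F₂` summand for each copy of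
(S-2), (P-1), (P-2), (X-2), (X-3), and one `F₂ ⊕ F₂` summand for each copy of (X-4). -/
abbrev QB (s₂ p₁ p₂ x₂ x₃ x₄ : ℕ) :=
  (Fin s₂ → F2) × (Fin p₁ → F2) × (Fin p₂ → F2) × (Fin x₂ → F2) × (Fin x₃ → F2) ×
    (Fin x₄ → F2 × F2)

/-- The `C`-space of the direct sum quiver: one `F₂` summand for each copy of
(S-3), (P-2), (X-1), (X-2), (X-3), (X-4). -/
abbrev QC (s₃ p₂ x₁ x₂ x₃ x₄ : ℕ) :=
  (Fin s₃ → F2) × (Fin p₂ → F2) × (Fin x₁ → F2) × (Fin x₂ → F2) × (Fin x₃ → F2) ×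
    (Fin x₄ → F2)

/-- The structure map `f₀ : A₀ → B₀` of the direct sum quiver. -/
def fQ {s₁ s₂ p₁ p₂ x₁ x₂ x₃ x₄ : ℕ} :
    QA s₁ p₁ x₁ x₂ x₃ x₄ →ₗ[F2] QB s₂ p₁ p₂ x₂ x₃ x₄ where
  toFun a := (0, a.2.1, 0, a.2.2.2.1, 0, fun m => (a.2.2.2.2.2 m, 0))
  map_add' a b := by ext <;> simp
  map_smul' c a := by ext <;> simp

/-- The structure map `g₀ : B₀ → C₀` of the direct sum quiver. -/
def gQ {s₂ s₃ p₁ p₂ x₁ x₂ x₃ x₄ : ℕ} :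
    QB s₂ p₁ p₂ x₂ x₃ x₄ →ₗ[F2] QC s₃ p₂ x₁ x₂ x₃ x₄ where
  toFun b := (0, b.2.2.1, 0, 0, b.2.2.2.2.1, fun m => (b.2.2.2.2.2 m).2)
  map_add' a b := by ext <;> simp
  map_smul' c a := by ext <;> simp

/-- The structure map `s₀ : A₀ → C₀` of the direct sum quiver. -/
def sQ {s₁ s₃ p₁ p₂ x₁ x₂ x₃ x₄ : ℕ} :
    QA s₁ p₁ x₁ x₂ x₃ x₄ →ₗ[F2] QC s₃ p₂ x₁ x₂ x₃ x₄ where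
  toFun a := (0, 0, a.2.2.1, a.2.2.2.1, a.2.2.2.2.1, a.2.2.2.2.2)
  map_add' a b := by ext <;> simp
  map_smul' c a := by ext <;> simp

/-- The quiver `(A, B, C, f, g, s)` is isomorphic to the direct sum of the nine
indecomposable quivers with multiplicities `(s₁, s₂, s₃, p₁, p₂, x₁, x₂, x₃, x₄)`. -/
def IsQuiverDecomposition
    (A B C : Type) [AddCommGroup A] [Module F2 A]
    [AddCommGroup B] [Module F2 B] [AddCommGroup C] [Module F2 C]
    (f : A →ₗ[F2] B) (g : B →ₗ[F2] C) (s : A →ₗ[F2] C)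
    (s₁ s₂ s₃ p₁ p₂ x₁ x₂ x₃ x₄ : ℕ) : Prop :=
  ∃ (α : A ≃ₗ[F2] QA s₁ p₁ x₁ x₂ x₃ x₄)
    (β : B ≃ₗ[F2] QB s₂ p₁ p₂ x₂ x₃ x₄)
    (γ : C ≃ₗ[F2] QC s₃ p₂ x₁ x₂ x₃ x₄),
    (∀ a, β (f a) = fQ (α a)) ∧ (∀ b, γ (g b) = gQ (β b)) ∧ (∀ a, γ (s a) = sQ (α a))


/-! ### Auxiliary machinery for the uniqueness proof -/

open Module LinearMap

section Helpers

variable {D D' P R R' : Type} [AddCommGroup D] [Module F2 D] [AddCommGroup D'] [Module F2 D']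
  [AddCommGroup P] [Module F2 P] [AddCommGroup R] [Module F2 R] [AddCommGroup R'] [Module F2 R']

lemma finrank_range_conj (M : D →ₗ[F2] R) (M' : D' →ₗ[F2] R')
    (e : D ≃ₗ[F2] D') (ε : R ≃ₗ[F2] R') (h : ∀ d, ε (M d) = M' (e d)) :
    Module.finrank F2 (LinearMap.range M) = Module.finrank F2 (LinearMap.range M') := by
  have hM : LinearMap.range M' = Submodule.map (ε : R →ₗ[F2] R') (LinearMap.range M) := by
    ext c
    simp only [LinearMap.mem_range, Submodule.mem_map]
    constructor
    · rintro ⟨d', rfl⟩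
      refine ⟨M (e.symm d'), ⟨_, rfl⟩, ?_⟩
      show ε (M (e.symm d')) = M' d'
      rw [h, e.apply_symm_apply]
    · rintro ⟨-, ⟨d, rfl⟩, rfl⟩
      exact ⟨e d, (h d).symm⟩
  rw [hM, LinearEquiv.finrank_map_eq]

lemma finrank_range_factor (M : D →ₗ[F2] R) (π : D →ₗ[F2] P) (ι : P →ₗ[F2] R)
    (hcomm : ∀ d, M d = ι (π d)) (hπ : Function.Surjective π) (hι : Function.Injective ι) :
    Module.finrank F2 (LinearMap.range M) = Module.finrank F2 P := by
  have h1 : M = ι ∘ₗ π := LinearMap.ext hcomm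
  rw [h1, LinearMap.range_comp, LinearMap.range_eq_top.2 hπ, Submodule.map_top]
  exact LinearMap.finrank_range_of_inj hι

end Helpers

section ModelRanks

variable {s₁ s₂ s₃ p₁ p₂ x₁ x₂ x₃ x₄ : ℕ}

lemma finrank_QA : finrank F2 (QA s₁ p₁ x₁ x₂ x₃ x₄) = s₁ + p₁ + x₁ + x₂ + x₃ + x₄ := by
  simp [Module.finrank_prod, Module.finrank_fin_fun]
  ring

lemma finrank_QB : finrank F2 (QB s₂ p₁ p₂ x₂ x₃ x₄) = s₂ + p₁ + p₂ + x₂ + x₃ + 2 * x₄ := by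
  simp [Module.finrank_prod, Module.finrank_fin_fun, Module.finrank_pi_fintype]
  ring

lemma finrank_QC : finrank F2 (QC s₃ p₂ x₁ x₂ x₃ x₄) = s₃ + p₂ + x₁ + x₂ + x₃ + x₄ := by
  simp [Module.finrank_prod, Module.finrank_fin_fun]
  ring

/-- Projection for factoring `fQ`. -/
def piF : QA s₁ p₁ x₁ x₂ x₃ x₄ →ₗ[F2] (Fin p₁ → F2) × (Fin x₂ → F2) × (Fin x₄ → F2) where
  toFun a := (a.2.1, a.2.2.2.1, a.2.2.2.2.2)
  map_add' _ _ := rfl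
  map_smul' _ _ := rfl

/-- Inclusion for factoring `fQ`. -/
def iotaF : (Fin p₁ → F2) × (Fin x₂ → F2) × (Fin x₄ → F2) →ₗ[F2] QB s₂ p₁ p₂ x₂ x₃ x₄ where
  toFun q := (0, q.1, 0, q.2.1, 0, fun m => (q.2.2 m, 0))
  map_add' a b := by ext <;> simp
  map_smul' c a := by ext <;> simp

lemma rank_fQ :
    finrank F2 (LinearMap.range (fQ (s₁ := s₁) (s₂ := s₂) (p₁ := p₁) (p₂ := p₂)
      (x₁ := x₁) (x₂ := x₂) (x₃ := x₃) (x₄ := x₄))) = p₁ + x₂ + x₄ := by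
  rw [finrank_range_factor _ piF iotaF (fun a => rfl)
    (fun q => ⟨(0, q.1, 0, q.2.1, 0, q.2.2), rfl⟩)
    (Function.LeftInverse.injective
      (g := fun b => (b.2.1, b.2.2.2.1, fun m => (b.2.2.2.2.2 m).1)) (fun q => rfl))]
  simp [Module.finrank_prod, Module.finrank_fin_fun]
  ring

/-- Projection for factoring `gQ`. -/
def piG : QB s₂ p₁ p₂ x₂ x₃ x₄ →ₗ[F2] (Fin p₂ → F2) × (Fin x₃ → F2) × (Fin x₄ → F2) where
  toFun b := (b.2.2.1, b.2.2.2.2.1, fun m => (b.2.2.2.2.2 m).2)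
  map_add' _ _ := rfl
  map_smul' _ _ := rfl

/-- Inclusion for factoring `gQ`. -/
def iotaG : (Fin p₂ → F2) × (Fin x₃ → F2) × (Fin x₄ → F2) →ₗ[F2] QC s₃ p₂ x₁ x₂ x₃ x₄ where
  toFun q := (0, q.1, 0, 0, q.2.1, q.2.2)
  map_add' a b := by ext <;> simp
  map_smul' c a := by ext <;> simp

lemma rank_gQ :
    finrank F2 (LinearMap.range (gQ (s₂ := s₂) (s₃ := s₃) (p₁ := p₁) (p₂ := p₂)
      (x₁ := x₁) (x₂ := x₂) (x₃ := x₃) (x₄ := x₄))) = p₂ + x₃ + x₄ := by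
  rw [finrank_range_factor _ piG iotaG (fun b => rfl)
    (fun q => ⟨(0, 0, q.1, 0, q.2.1, fun m => (0, q.2.2 m)), rfl⟩)
    (Function.LeftInverse.injective
      (g := fun c => (c.2.1, c.2.2.2.2.1, c.2.2.2.2.2)) (fun q => rfl))]
  simp [Module.finrank_prod, Module.finrank_fin_fun]
  ring

/-- Projection for factoring `sQ`. -/
def piS : QA s₁ p₁ x₁ x₂ x₃ x₄ →ₗ[F2]
    (Fin x₁ → F2) × (Fin x₂ → F2) × (Fin x₃ → F2) × (Fin x₄ → F2) where
  toFun a := (a.2.2.1, a.2.2.2.1, a.2.2.2.2.1, a.2.2.2.2.2)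
  map_add' _ _ := rfl
  map_smul' _ _ := rfl

/-- Inclusion for factoring `sQ`. -/
def iotaS : (Fin x₁ → F2) × (Fin x₂ → F2) × (Fin x₃ → F2) × (Fin x₄ → F2) →ₗ[F2]
    QC s₃ p₂ x₁ x₂ x₃ x₄ where
  toFun q := (0, 0, q.1, q.2.1, q.2.2.1, q.2.2.2)
  map_add' a b := by ext <;> simp
  map_smul' c a := by ext <;> simp

lemma rank_sQ :
    finrank F2 (LinearMap.range (sQ (s₁ := s₁) (s₃ := s₃) (p₁ := p₁) (p₂ := p₂)
      (x₁ := x₁) (x₂ := x₂) (x₃ := x₃) (x₄ := x₄))) = x₁ + x₂ + x₃ + x₄ := by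
  rw [finrank_range_factor _ piS iotaS (fun a => rfl)
    (fun q => ⟨(0, 0, q.1, q.2.1, q.2.2.1, q.2.2.2), rfl⟩)
    (Function.LeftInverse.injective
      (g := fun c => (c.2.2.1, c.2.2.2.1, c.2.2.2.2.1, c.2.2.2.2.2)) (fun q => rfl))]
  simp [Module.finrank_prod, Module.finrank_fin_fun]
  ring

/-- Projection for factoring `fQ.prod sQ`. -/
def piFS : QA s₁ p₁ x₁ x₂ x₃ x₄ →ₗ[F2]
    (Fin p₁ → F2) × (Fin x₁ → F2) × (Fin x₂ → F2) × (Fin x₃ → F2) × (Fin x₄ → F2) where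
  toFun a := (a.2.1, a.2.2.1, a.2.2.2.1, a.2.2.2.2.1, a.2.2.2.2.2)
  map_add' _ _ := rfl
  map_smul' _ _ := rfl

/-- Inclusion for factoring `fQ.prod sQ`. -/
def iotaFS : (Fin p₁ → F2) × (Fin x₁ → F2) × (Fin x₂ → F2) × (Fin x₃ → F2) × (Fin x₄ → F2)
    →ₗ[F2] QB s₂ p₁ p₂ x₂ x₃ x₄ × QC s₃ p₂ x₁ x₂ x₃ x₄ where
  toFun q := ((0, q.1, 0, q.2.2.1, 0, fun m => (q.2.2.2.2 m, 0)),
    (0, 0, q.2.1, q.2.2.1, q.2.2.2.1, q.2.2.2.2))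
  map_add' a b := by ext <;> simp
  map_smul' c a := by ext <;> simp

lemma rank_fsQ :
    finrank F2 (LinearMap.range ((fQ (s₂ := s₂) (p₂ := p₂)).prod
      (sQ (s₁ := s₁) (s₃ := s₃) (p₁ := p₁) (p₂ := p₂)
        (x₁ := x₁) (x₂ := x₂) (x₃ := x₃) (x₄ := x₄)))) = p₁ + x₁ + x₂ + x₃ + x₄ := by
  rw [finrank_range_factor _ piFS iotaFS (fun a => rfl)
    (fun q => ⟨(0, q.1, q.2.1, q.2.2.1, q.2.2.2.1, q.2.2.2.2), rfl⟩)
    (Function.LeftInverse.injective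
      (g := fun c => (c.1.2.1, c.2.2.2.1, c.2.2.2.2.1, c.2.2.2.2.2.1, c.2.2.2.2.2.2))
      (fun q => rfl))]
  simp [Module.finrank_prod, Module.finrank_fin_fun]
  ring

/-- Projection for factoring `gQ.coprod sQ`. -/
def piGS : QB s₂ p₁ p₂ x₂ x₃ x₄ × QA s₁ p₁ x₁ x₂ x₃ x₄ →ₗ[F2]
    (Fin p₂ → F2) × (Fin x₁ → F2) × (Fin x₂ → F2) × (Fin x₃ → F2) × (Fin x₄ → F2) where
  toFun d := (d.1.2.2.1, d.2.2.2.1, d.2.2.2.2.1,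
    d.1.2.2.2.2.1 + d.2.2.2.2.2.1, fun m => (d.1.2.2.2.2.2 m).2 + d.2.2.2.2.2.2 m)
  map_add' a b := by ext <;> simp <;> ring
  map_smul' c a := by ext <;> simp <;> ring

/-- Inclusion for factoring `gQ.coprod sQ`. -/
def iotaGS : (Fin p₂ → F2) × (Fin x₁ → F2) × (Fin x₂ → F2) × (Fin x₃ → F2) × (Fin x₄ → F2)
    →ₗ[F2] QC s₃ p₂ x₁ x₂ x₃ x₄ where
  toFun q := (0, q.1, q.2.1, q.2.2.1, q.2.2.2.1, q.2.2.2.2)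
  map_add' a b := by ext <;> simp
  map_smul' c a := by ext <;> simp

lemma rank_gsQ :
    finrank F2 (LinearMap.range ((gQ (s₂ := s₂) (s₃ := s₃) (p₁ := p₁)).coprod
      (sQ (s₁ := s₁) (p₁ := p₁) (s₃ := s₃) (p₂ := p₂)
        (x₁ := x₁) (x₂ := x₂) (x₃ := x₃) (x₄ := x₄)))) = p₂ + x₁ + x₂ + x₃ + x₄ := by
  rw [finrank_range_factor _ piGS iotaGS
    (fun d => by ext <;> simp [gQ, sQ, piGS, iotaGS])
    (fun q => ⟨((0, 0, q.1, 0, q.2.2.2.1, fun m => (0, q.2.2.2.2 m)),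
      (0, 0, q.2.1, q.2.2.1, 0, 0)), by ext <;> simp [piGS]⟩)
    (Function.LeftInverse.injective
      (g := fun c => (c.2.1, c.2.2.1, c.2.2.2.1, c.2.2.2.2.1, c.2.2.2.2.2)) (fun q => rfl))]
  simp [Module.finrank_prod, Module.finrank_fin_fun]
  ring

/-- Projection for factoring `(sQ.coprod gQ).prod (fQ ∘ₗ fst)`. -/
def piPsi : QA s₁ p₁ x₁ x₂ x₃ x₄ × QB s₂ p₁ p₂ x₂ x₃ x₄ →ₗ[F2]
    (Fin p₁ → F2) × (Fin p₂ → F2) × (Fin x₁ → F2) × (Fin x₂ → F2) × (Fin x₃ → F2) ×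
      (Fin x₄ → F2) × (Fin x₄ → F2) where
  toFun d := (d.1.2.1, d.2.2.2.1, d.1.2.2.1, d.1.2.2.2.1,
    d.1.2.2.2.2.1 + d.2.2.2.2.2.1, d.1.2.2.2.2.2,
    fun m => d.1.2.2.2.2.2 m + (d.2.2.2.2.2.2 m).2)
  map_add' a b := by ext <;> simp <;> ring
  map_smul' c a := by ext <;> simp <;> ring

/-- Inclusion for factoring `(sQ.coprod gQ).prod (fQ ∘ₗ fst)`. -/
def iotaPsi : (Fin p₁ → F2) × (Fin p₂ → F2) × (Fin x₁ → F2) × (Fin x₂ → F2) × (Fin x₃ → F2) ×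
      (Fin x₄ → F2) × (Fin x₄ → F2)
    →ₗ[F2] QC s₃ p₂ x₁ x₂ x₃ x₄ × QB s₂ p₁ p₂ x₂ x₃ x₄ where
  toFun q := ((0, q.2.1, q.2.2.1, q.2.2.2.1, q.2.2.2.2.1, q.2.2.2.2.2.2),
    (0, q.1, 0, q.2.2.2.1, 0, fun m => (q.2.2.2.2.2.1 m, 0)))
  map_add' a b := by ext <;> simp
  map_smul' c a := by ext <;> simp

set_option synthInstance.maxHeartbeats 1000000 in
set_option maxHeartbeats 2000000 in
lemma rank_psiQ :
    finrank F2 (LinearMap.range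
      (((sQ (s₁ := s₁) (s₃ := s₃) (p₁ := p₁) (p₂ := p₂)).coprod
          (gQ (s₂ := s₂))).prod
        ((fQ (s₁ := s₁) (s₂ := s₂) (p₁ := p₁) (p₂ := p₂) (x₁ := x₁) (x₂ := x₂) (x₃ := x₃) (x₄ := x₄)) ∘ₗ LinearMap.fst F2 (QA s₁ p₁ x₁ x₂ x₃ x₄) (QB s₂ p₁ p₂ x₂ x₃ x₄))))
      = p₁ + p₂ + x₁ + x₂ + x₃ + 2 * x₄ := by
  rw [finrank_range_factor _ piPsi iotaPsi
    (fun d => by ext <;> simp [fQ, gQ, sQ, piPsi, iotaPsi])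
    (fun q => ⟨((0, q.1, q.2.2.1, q.2.2.2.1, 0, q.2.2.2.2.2.1),
      (0, 0, q.2.1, 0, q.2.2.2.2.1, fun m => (0, q.2.2.2.2.2.2 m - q.2.2.2.2.2.1 m))),
      by ext <;> simp [piPsi]⟩)
    (Function.LeftInverse.injective
      (g := fun c => (c.2.2.1, c.1.2.1, c.1.2.2.1, c.1.2.2.2.1, c.1.2.2.2.2.1,
        fun m => (c.2.2.2.2.2.2 m).1, c.1.2.2.2.2.2)) (fun q => rfl))]
  simp [Module.finrank_prod, Module.finrank_fin_fun]
  ring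

end ModelRanks

set_option synthInstance.maxHeartbeats 1000000 in
set_option maxHeartbeats 2000000 in
/-- A decomposition determines the nine numerical invariants. -/
lemma decomposition_eqs
    (A B C : Type) [AddCommGroup A] [Module F2 A]
    [AddCommGroup B] [Module F2 B] [AddCommGroup C] [Module F2 C]
    (f : A →ₗ[F2] B) (g : B →ₗ[F2] C) (s : A →ₗ[F2] C)
    (s₁ s₂ s₃ p₁ p₂ x₁ x₂ x₃ x₄ : ℕ)
    (h : IsQuiverDecomposition A B C f g s s₁ s₂ s₃ p₁ p₂ x₁ x₂ x₃ x₄) :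
    finrank F2 A = s₁ + p₁ + x₁ + x₂ + x₃ + x₄ ∧
    finrank F2 B = s₂ + p₁ + p₂ + x₂ + x₃ + 2 * x₄ ∧
    finrank F2 C = s₃ + p₂ + x₁ + x₂ + x₃ + x₄ ∧
    finrank F2 (LinearMap.range f) = p₁ + x₂ + x₄ ∧
    finrank F2 (LinearMap.range g) = p₂ + x₃ + x₄ ∧
    finrank F2 (LinearMap.range s) = x₁ + x₂ + x₃ + x₄ ∧
    finrank F2 (LinearMap.range (f.prod s)) = p₁ + x₁ + x₂ + x₃ + x₄ ∧
    finrank F2 (LinearMap.range (g.coprod s)) = p₂ + x₁ + x₂ + x₃ + x₄ ∧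
    finrank F2 (LinearMap.range ((s.coprod g).prod (f ∘ₗ LinearMap.fst F2 A B)))
      = p₁ + p₂ + x₁ + x₂ + x₃ + 2 * x₄ := by
  obtain ⟨α, β, γ, hf, hg, hs⟩ := h
  refine ⟨?_, ?_, ?_, ?_, ?_, ?_, ?_, ?_, ?_⟩
  · rw [α.finrank_eq, finrank_QA]
  · rw [β.finrank_eq, finrank_QB]
  · rw [γ.finrank_eq, finrank_QC]
  · rw [finrank_range_conj f fQ α β hf, rank_fQ]
  · rw [finrank_range_conj g gQ β γ hg, rank_gQ]
  · rw [finrank_range_conj s sQ α γ hs, rank_sQ]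
  · rw [finrank_range_conj (f.prod s) (fQ.prod sQ) α (β.prodCongr γ)
      (fun d => by
        show (β (f d), γ (s d)) = (fQ (α d), sQ (α d))
        rw [hf, hs]), rank_fsQ]
  · rw [finrank_range_conj (g.coprod s) (gQ.coprod sQ) (β.prodCongr α) γ
      (fun d => by
        show γ (g d.1 + s d.2) = gQ (β d.1) + sQ (α d.2)
        rw [map_add, hg, hs]), rank_gsQ]
  · rw [finrank_range_conj ((s.coprod g).prod (f ∘ₗ LinearMap.fst F2 A B))
      ((sQ.coprod gQ).prod (fQ ∘ₗ LinearMap.fst F2 _ _)) (α.prodCongr β) (γ.prodCongr β)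
      (fun d => by
        show (γ (s d.1 + g d.2), β (f d.1)) = (sQ (α d.1) + gQ (β d.2), fQ (α d.1))
        rw [map_add, hs, hg, hf]), rank_psiQ]

/-- Uniqueness of the decomposition of a quiver over `F₂` (with `g ∘ f = 0`) into the nine
indecomposable quivers: the multiplicities of the indecomposable summands are uniquely
determined. -/
theorem quiver_decomposition_unique
    (A B C : Type) [AddCommGroup A] [Module F2 A] [FiniteDimensional F2 A]
    [AddCommGroup B] [Module F2 B] [FiniteDimensional F2 B]
    [AddCommGroup C] [Module F2 C] [FiniteDimensional F2 C]
    (f : A →ₗ[F2] B) (g : B →ₗ[F2] C) (s : A →ₗ[F2] C)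
    (hgf : g ∘ₗ f = 0)
    (s₁ s₂ s₃ p₁ p₂ x₁ x₂ x₃ x₄ s₁' s₂' s₃' p₁' p₂' x₁' x₂' x₃' x₄' : ℕ)
    (h : IsQuiverDecomposition A B C f g s s₁ s₂ s₃ p₁ p₂ x₁ x₂ x₃ x₄)
    (h' : IsQuiverDecomposition A B C f g s s₁' s₂' s₃' p₁' p₂' x₁' x₂' x₃' x₄') :
    s₁ = s₁' ∧ s₂ = s₂' ∧ s₃ = s₃' ∧ p₁ = p₁' ∧ p₂ = p₂' ∧
      x₁ = x₁' ∧ x₂ = x₂' ∧ x₃ = x₃' ∧ x₄ = x₄' := by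
  obtain ⟨e1, e2, e3, e4, e5, e6, e7, e8, e9⟩ :=
    decomposition_eqs A B C f g s s₁ s₂ s₃ p₁ p₂ x₁ x₂ x₃ x₄ h
  obtain ⟨e1', e2', e3', e4', e5', e6', e7', e8', e9'⟩ :=
    decomposition_eqs A B C f g s s₁' s₂' s₃' p₁' p₂' x₁' x₂' x₃' x₄' h'
  rw [e1, e2, e3, e4, e5, e6, e7, e8, e9] at *
  omega
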